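/- Let X be a nonempty complete metric space, H a complex Hilbert space, and for each A ∈ X let (T_A(t))_{t≥0} be a C₀-semigroup of contractions on H such that for every t ≥ 0 and x ∈ H the map X ∋ A ↦ T_A(t)x ∈ H is continuous. Fix x ∈ H. Then Y_x = {A ∈ X : lim_{t→∞} ‖T_A(t)x‖ = 0} is a G_δ subset of X. If moreover the set {A ∈ X : (T_A(t))_{t≥0} is exponentially stable} is dense in X, then Y_x is a dense G_δ subset of X. -/
import Mathlib


open Filter Topology

/-- `T` is a C₀-semigroup of contractions on the complex Hilbert space `H`. -/
def IsContractionC0Semigroup {H : Type*} [NormedAddCommGroup H] [InnerProductSpace ℂ H]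
    (T : ℝ → H →L[ℂ] H) : Prop :=
  T 0 = 1 ∧
  (∀ s t : ℝ, 0 ≤ s → 0 ≤ t → T (s + t) = T s ∘L T t) ∧
  (∀ t : ℝ, 0 ≤ t → ‖T t‖ ≤ 1) ∧
  (∀ x : H, ContinuousOn (fun t : ℝ => T t x) (Set.Ici 0))

/-- `T` is exponentially stable. -/
def IsExpStable {H : Type*} [NormedAddCommGroup H] [InnerProductSpace ℂ H]
    (T : ℝ → H →L[ℂ] H) : Prop :=
  ∃ C > (0 : ℝ), ∃ a > (0 : ℝ), ∀ t : ℝ, 0 ≤ t → ‖T t‖ ≤ C * Real.exp (-(t * a))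

/-- for a family of contraction `C₀`-semigroups on a complex Hilbert
space depending strongly continuously on a parameter ranging in a nonempty
complete metric space `X`, and a fixed vector `x`, the set
`Y_x = {A | ‖T_A(t) x‖ → 0 as t → ∞}` is a `G_δ` subset of `X`; if moreover the
exponentially stable parameters form a dense subset of `X`, then `Y_x` is a dense
`G_δ` subset of `X`. -/
theorem orbit_stable_isGδ_and_dense
    {X : Type*} [MetricSpace X] [CompleteSpace X] [Nonempty X]
    {H : Type*} [NormedAddCommGroup H] [InnerProductSpace ℂ H] [CompleteSpace H]
    (T : X → ℝ → H →L[ℂ] H)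
    (hsem : ∀ A : X, IsContractionC0Semigroup (T A))
    (hcont : ∀ t : ℝ, 0 ≤ t → ∀ y : H, Continuous fun A : X => T A t y)
    (x : H) :
    IsGδ {A : X | Tendsto (fun t : ℝ => ‖T A t x‖) atTop (𝓝 0)} ∧
    (Dense {A : X | IsExpStable (T A)} →
      Dense {A : X | Tendsto (fun t : ℝ => ‖T A t x‖) atTop (𝓝 0)}) := by
  -- monotonicity of t ↦ ‖T A t x‖
  have mono : ∀ A : X, ∀ s t : ℝ, 0 ≤ s → s ≤ t → ‖T A t x‖ ≤ ‖T A s x‖ := by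
    intro A s t hs hst
    have h := (hsem A).2.1 (t - s) s (by linarith) hs
    have ht : t - s + s = t := by ring
    rw [ht] at h
    calc ‖T A t x‖ = ‖T A (t - s) (T A s x)‖ := by rw [h]; rfl
      _ ≤ ‖T A (t - s)‖ * ‖T A s x‖ := (T A (t - s)).le_opNorm _
      _ ≤ 1 * ‖T A s x‖ := by
          exact mul_le_mul_of_nonneg_right ((hsem A).2.2.1 _ (by linarith)) (norm_nonneg _)
      _ = ‖T A s x‖ := one_mul _
  have key : {A : X | Tendsto (fun t : ℝ => ‖T A t x‖) atTop (𝓝 0)} =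
      ⋂ n : ℕ, ⋃ t ∈ Set.Ici (0 : ℝ), {A : X | ‖T A t x‖ < 1 / (n + 1)} := by
    ext A
    simp only [Set.mem_setOf_eq, Set.mem_iInter, Set.mem_iUnion, Set.mem_Ici]
    constructor
    · intro h n
      have hpos : (0 : ℝ) < 1 / (n + 1) := by positivity
      obtain ⟨t, h'⟩ := Filter.eventually_atTop.mp (h.eventually (eventually_lt_nhds hpos))
      exact ⟨max t 0, ⟨le_max_right _ _, h' (max t 0) (le_max_left _ _)⟩⟩
    · intro h
      rw [Metric.tendsto_atTop]
      intro ε hε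
      obtain ⟨n, hn⟩ := exists_nat_one_div_lt hε
      obtain ⟨t, ht0, ht⟩ := h n
      refine ⟨t, fun s hs => ?_⟩
      rw [Real.dist_eq, sub_zero, abs_of_nonneg (norm_nonneg _)]
      calc ‖T A s x‖ ≤ ‖T A t x‖ := mono A t s ht0 hs
        _ < 1 / (n + 1) := ht
        _ < ε := hn
  constructor
  · rw [key]
    refine IsGδ.iInter fun n => IsOpen.isGδ ?_
    refine isOpen_biUnion fun t ht => ?_
    have : Continuous fun A : X => ‖T A t x‖ := (hcont t ht x).norm
    exact isOpen_lt this continuous_const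
  · intro hd
    refine hd.mono fun A hA => ?_
    obtain ⟨C, hC, a, ha, hbound⟩ := hA
    have h1 : Tendsto (fun t : ℝ => C * Real.exp (-(t * a)) * ‖x‖) atTop (𝓝 0) := by
      have : Tendsto (fun t : ℝ => -(t * a)) atTop atBot :=
        tendsto_neg_atTop_atBot.comp (Tendsto.atTop_mul_const ha tendsto_id)
      have h2 := Real.tendsto_exp_atBot.comp this
      have h3 := (h2.const_mul C).mul_const ‖x‖
      simpa using h3
    refine squeeze_zero' ?_ ?_ h1
    · exact Eventually.of_forall fun t => norm_nonneg _
    · filter_upwards [eventually_ge_atTop (0:ℝ)] with t ht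
      calc ‖T A t x‖ ≤ ‖T A t‖ * ‖x‖ := (T A t).le_opNorm x
        _ ≤ C * Real.exp (-(t * a)) * ‖x‖ :=
            mul_le_mul_of_nonneg_right (hbound t ht) (norm_nonneg _)
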